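/- Let d be a natural number and m₀ an integer with |m₀| = d. Define x_{j,k} = (-1)^{j+k} · ε^j · C(d, 2k-j) for 0 ≤ j, k ≤ d, where ε = sgn(m₀)·i (i the imaginary unit) and C(d, n) = 0 when n < 0 or n > d. Then ∑_{k=0}^{d} x_{j,k} · B(k + 1/2, d - k + 1/2) = ε^j · 2^{-d} · π, where B is the Beta function. -/

import Mathlib

lemma gamma_half (k : ℕ) : Complex.Gamma ((k : ℂ) + 1 / 2)
    = ((2 * k).factorial : ℂ) / (4 ^ k * (k.factorial : ℂ)) * (Real.sqrt Real.pi : ℂ) := by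
  induction k with
  | zero =>
    rw [show ((0:ℕ):ℂ) + 1/2 = ((1/2 : ℝ) : ℂ) by push_cast; ring, Complex.Gamma_ofReal,
      Real.Gamma_one_half_eq]
    norm_num
  | succ n ih =>
    have hne : (n : ℂ) + 1 / 2 ≠ 0 := by
      rw [show (n : ℂ) + 1/2 = (((n : ℝ) + 1/2 : ℝ) : ℂ) by push_cast; ring]
      rw [Complex.ofReal_ne_zero]
      positivity
    have hstep : ((n + 1 : ℕ) : ℂ) + 1 / 2 = ((n : ℂ) + 1 / 2) + 1 := by push_cast; ring
    rw [hstep, Complex.Gamma_add_one _ hne, ih]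
    have hf : ((n.factorial : ℂ)) ≠ 0 := by exact_mod_cast n.factorial_ne_zero
    have hf2 : (((n+1).factorial : ℂ)) ≠ 0 := by exact_mod_cast (n+1).factorial_ne_zero
    have hd1 : (4:ℂ)^n * (n.factorial:ℂ) ≠ 0 := mul_ne_zero (pow_ne_zero _ (by norm_num)) hf
    have hd2 : (4:ℂ)^(n+1) * ((n+1).factorial:ℂ) ≠ 0 :=
      mul_ne_zero (pow_ne_zero _ (by norm_num)) hf2
    have harith : ((n:ℂ) + 1/2) * (((2*n).factorial : ℂ)/(4^n * (n.factorial : ℂ)))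
        = ((2*(n+1)).factorial : ℂ)/(4^(n+1) * ((n+1).factorial : ℂ)) := by
      rw [mul_div_assoc', div_eq_div_iff hd1 hd2,
        show 2*(n+1) = 2*n+1+1 by ring, Nat.factorial_succ (2*n+1), Nat.factorial_succ (2*n),
        Nat.factorial_succ n]
      push_cast
      ring
    rw [← harith]
    ring
lemma beta_val (d k : ℕ) (hk : k ≤ d) :
    Complex.betaIntegral ((k : ℂ) + 1 / 2) ((d : ℂ) - (k : ℂ) + 1 / 2)
      = (Real.pi : ℂ) * ((2 * k).factorial : ℂ) * ((2 * (d - k)).factorial : ℂ) /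
        (4 ^ d * (k.factorial : ℂ) * ((d - k).factorial : ℂ) * (d.factorial : ℂ)) := by
  have h1 : ((d : ℂ) - (k : ℂ) + 1 / 2) = (((d - k : ℕ) : ℂ) + 1 / 2) := by
    push_cast [Nat.cast_sub hk]; ring
  have hs : 0 < ((k : ℂ) + 1 / 2).re := by
    simp [Complex.add_re]
    positivity
  have ht : 0 < (((d - k : ℕ) : ℂ) + 1 / 2).re := by
    simp [Complex.add_re]
    positivity
  have key := Complex.Gamma_mul_Gamma_eq_betaIntegral hs ht
  have hsum : ((k : ℂ) + 1 / 2) + (((d - k : ℕ) : ℂ) + 1 / 2) = (d : ℂ) + 1 := by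
    push_cast [Nat.cast_sub hk]; ring
  rw [hsum] at key
  have hGd : Complex.Gamma ((d : ℂ) + 1) = (d.factorial : ℂ) := by
    exact_mod_cast Complex.Gamma_nat_eq_factorial d
  rw [hGd, gamma_half, gamma_half] at key
  have hfd : ((d.factorial : ℂ)) ≠ 0 := by exact_mod_cast d.factorial_ne_zero
  have hsq : (Real.sqrt Real.pi : ℂ) * (Real.sqrt Real.pi : ℂ) = (Real.pi : ℂ) := by
    rw [← Complex.ofReal_mul, Real.mul_self_sqrt Real.pi_pos.le]
  have h4 : (4:ℂ)^k * (4:ℂ)^(d-k) = 4^d := by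
    rw [← pow_add, Nat.add_sub_cancel' hk]
  have hb : Complex.betaIntegral ((k : ℂ) + 1 / 2) (((d - k : ℕ) : ℂ) + 1 / 2)
      = (((2 * k).factorial : ℂ) / (4 ^ k * (k.factorial : ℂ)) * (Real.sqrt Real.pi : ℂ) *
        (((2 * (d - k)).factorial : ℂ) / (4 ^ (d - k) * ((d - k).factorial : ℂ)) *
          (Real.sqrt Real.pi : ℂ))) / (d.factorial : ℂ) := by
    rw [eq_div_iff hfd]
    linear_combination -key
  have hfk : ((k.factorial : ℂ)) ≠ 0 := by exact_mod_cast k.factorial_ne_zero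
  have hfdk : (((d - k).factorial : ℂ)) ≠ 0 := by exact_mod_cast (d - k).factorial_ne_zero
  have h4k : (4:ℂ)^k ≠ 0 := pow_ne_zero _ (by norm_num)
  have h4dk : (4:ℂ)^(d-k) ≠ 0 := pow_ne_zero _ (by norm_num)
  rw [h1, hb, ← h4, ← hsq, ]
  simp only [div_mul_eq_mul_div, mul_div_assoc', div_div]
  rw [div_eq_div_iff (mul_ne_zero (mul_ne_zero (mul_ne_zero h4k hfk) (mul_ne_zero h4dk hfdk)) hfd)
      (mul_ne_zero (mul_ne_zero (mul_ne_zero (mul_ne_zero h4k h4dk) hfk) hfdk) hfd)]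
  ring
open Polynomial Finset in
lemma key_id (d j : ℕ) (hj : j ≤ d) :
    ∑ k ∈ Finset.range (d + 1),
      (-1 : ℤ) ^ k * (d.choose k) * ((2 * k).choose j) * ((2 * (d - k)).choose (d - j))
    = (-1) ^ j * 2 ^ d * (d.choose j) := by
  set u : ℤ[X] := X + 1 with hu
  have main : ∑ k ∈ Finset.range (d + 1),
        (Polynomial.C ((-1 : ℤ[X]) ^ k * (d.choose k : ℤ[X]) * u ^ (2 * k))) * (X + 1) ^ (2 * (d - k))
      = (X - Polynomial.C X) ^ d * (X + Polynomial.C (X + 2)) ^ d := by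
    have hfac : ((X + 1 : (ℤ[X])[X]) ^ 2 - (Polynomial.C u) ^ 2)
        = (X - Polynomial.C X) * (X + Polynomial.C (X + 2)) := by
      simp only [hu, map_add, Polynomial.C_1, map_ofNat]
      ring
    rw [← mul_pow, ← hfac, sub_pow, ← Finset.sum_range_reflect]
    refine Finset.sum_congr rfl fun k hk => ?_
    rw [Finset.mem_range] at hk
    have hk' : k ≤ d := by omega
    rw [show d + 1 - 1 - k = d - k by omega,
      show d - (d - k) = k by omega, Nat.choose_symm hk',
      show k + d = (d - k) + 2 * k by omega, pow_add,
      show ((-1 : (ℤ[X])[X]) ^ (2 * k)) = 1 by rw [pow_mul]; norm_num, mul_one,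
      ← pow_mul, ← pow_mul, ← map_pow]
    simp only [map_mul, map_pow, map_neg, map_natCast, Polynomial.C_1]
    ring
  have h1 := congrArg (fun p => Polynomial.coeff (Polynomial.coeff p (d - j)) j) main
  rw [Polynomial.finset_sum_coeff] at h1
  simp only [Polynomial.coeff_C_mul, Polynomial.coeff_X_add_one_pow] at h1
  rw [Polynomial.finset_sum_coeff] at h1
  have hL : ∀ k, (((-1 : ℤ[X]) ^ k * (d.choose k : ℤ[X]) * u ^ (2 * k) *
        ((2 * (d - k)).choose (d - j) : ℤ[X]))).coeff j
      = (-1 : ℤ) ^ k * (d.choose k) * ((2 * k).choose j) * ((2 * (d - k)).choose (d - j)) := by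
    intro k
    have heq : ((-1 : ℤ[X]) ^ k * (d.choose k : ℤ[X]) * u ^ (2 * k) *
          ((2 * (d - k)).choose (d - j) : ℤ[X]))
        = Polynomial.C ((-1 : ℤ) ^ k * (d.choose k : ℤ) * ((2 * (d - k)).choose (d - j) : ℤ))
            * u ^ (2 * k) := by
      simp only [map_mul, map_pow, map_neg, map_natCast, Polynomial.C_1]
      ring
    rw [heq, Polynomial.coeff_C_mul, hu, Polynomial.coeff_X_add_one_pow]
    ring
  simp only [hL] at h1
  rw [h1]
  clear h1 main hL
  rw [Polynomial.coeff_mul, Polynomial.finset_sum_coeff]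
  have hsub : (X - Polynomial.C X : (ℤ[X])[X]) = X + Polynomial.C (-X) := by
    rw [map_neg]; ring
  have h2C : (X + 2 : ℤ[X]) = X + Polynomial.C 2 := by
    norm_num
  rw [Finset.sum_eq_single ((d - j, 0) : ℕ × ℕ)]
  · -- main term
    rw [hsub, Polynomial.coeff_X_add_C_pow, Polynomial.coeff_X_add_C_pow]
    rw [show d - (d - j) = j by omega, Nat.choose_symm hj, tsub_zero, Nat.choose_zero_right]
    have heq : ((-X : ℤ[X]) ^ j * (d.choose j : ℤ[X])) * ((X + 2) ^ d * ((1 : ℕ) : ℤ[X]))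
        = Polynomial.C ((-1 : ℤ) ^ j * (d.choose j : ℤ)) * (X ^ j * (X + 2) ^ d) := by
      simp only [map_mul, map_pow, map_neg, map_natCast, Polynomial.C_1]
      push_cast
      ring
    rw [heq, Polynomial.coeff_C_mul, Polynomial.coeff_X_pow_mul', if_pos le_rfl, Nat.sub_self,
      h2C, Polynomial.coeff_X_add_C_pow, tsub_zero, Nat.choose_zero_right]
    push_cast
    ring
  · -- off terms
    rintro ⟨a, b⟩ hmem hne
    rw [Finset.HasAntidiagonal.mem_antidiagonal] at hmem
    have hb : b ≠ 0 := by
      rintro rfl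
      exact hne (by simp; omega)
    have haj : j < d - a := by omega
    rw [hsub, Polynomial.coeff_X_add_C_pow, Polynomial.coeff_X_add_C_pow]
    have heq : ((-X : ℤ[X]) ^ (d - a) * (d.choose a : ℤ[X])) * ((X + 2) ^ (d - b) * (d.choose b : ℤ[X]))
        = Polynomial.C ((-1 : ℤ) ^ (d - a) * (d.choose a : ℤ) * (d.choose b : ℤ))
            * (X ^ (d - a) * (X + 2) ^ (d - b)) := by
      simp only [map_mul, map_pow, map_neg, map_natCast, Polynomial.C_1]
      ring
    rw [heq, Polynomial.coeff_C_mul, Polynomial.coeff_X_pow_mul', if_neg (by omega), mul_zero]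
  · intro h
    exact absurd (Finset.HasAntidiagonal.mem_antidiagonal.mpr (by omega)) h
lemma rat_id (d j k : ℕ) (hj : j ≤ d) (hk : k ≤ d) (h1 : j ≤ 2 * k) (h2 : 2 * k - j ≤ d) :
    ((d.choose (2 * k - j)) : ℚ) * (((2 * k).factorial : ℚ) * ((2 * (d - k)).factorial : ℚ))
      = ((2 * k).choose j : ℚ) * ((2 * (d - k)).choose (d - j) : ℚ) * (d.choose k : ℚ) *
        ((j.factorial : ℚ) * ((d - j).factorial : ℚ)) *
        ((k.factorial : ℚ) * ((d - k).factorial : ℚ)) := by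
  have h3 : d - j ≤ 2 * (d - k) := by omega
  have e4 : d - (2 * k - j) = 2 * (d - k) - (d - j) := by omega
  rw [Nat.cast_choose ℚ h1, Nat.cast_choose ℚ h2, Nat.cast_choose ℚ h3, Nat.cast_choose ℚ hk, e4]
  have ne : ∀ n : ℕ, ((n.factorial : ℚ)) ≠ 0 := fun n => by
    exact_mod_cast n.factorial_ne_zero
  simp only [div_mul_eq_mul_div, mul_div_assoc', div_mul_div_comm, div_div]
  rw [div_eq_div_iff (by positivity) (by positivity)]
  ring

lemma cplx_id (d j k : ℕ) (hj : j ≤ d) (hk : k ≤ d) :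
    (if j ≤ 2 * k then ((d.choose (2 * k - j)) : ℂ) else 0) *
        (((2 * k).factorial : ℂ) * ((2 * (d - k)).factorial : ℂ))
      = ((2 * k).choose j : ℂ) * ((2 * (d - k)).choose (d - j) : ℂ) * (d.choose k : ℂ) *
        ((j.factorial : ℂ) * ((d - j).factorial : ℂ)) *
        ((k.factorial : ℂ) * ((d - k).factorial : ℂ)) := by
  by_cases h1 : j ≤ 2 * k
  · rw [if_pos h1]
    by_cases h2 : 2 * k - j ≤ d
    · exact_mod_cast congrArg ((↑) : ℚ → ℂ) (rat_id d j k hj hk h1 h2)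
    · rw [Nat.choose_eq_zero_of_lt (by omega : d < 2 * k - j),
        Nat.choose_eq_zero_of_lt (by omega : 2 * (d - k) < d - j)]
      simp
  · rw [if_neg h1, Nat.choose_eq_zero_of_lt (by omega : 2 * k < j)]
    simp

open Complex in
theorem stmt3 (d : ℕ) (m0 : ℤ) (hm : m0.natAbs = d) (j : ℕ) (hj : j ≤ d) :
    ∑ k ∈ Finset.range (d + 1),
      ((-1 : ℂ) ^ (j + k) * ((Int.sign m0 : ℂ) * Complex.I) ^ j *
        (if j ≤ 2 * k then ((d.choose (2 * k - j) : ℂ)) else 0)) *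
        Complex.betaIntegral ((k : ℂ) + 1 / 2) ((d : ℂ) - (k : ℂ) + 1 / 2)
      = ((Int.sign m0 : ℂ) * Complex.I) ^ j * (2 : ℂ) ^ (-(d : ℤ)) * (Real.pi : ℂ) := by
  set ε : ℂ := (Int.sign m0 : ℂ) * Complex.I with hε
  have ne : ∀ n : ℕ, ((n.factorial : ℂ)) ≠ 0 := fun n => by
    exact_mod_cast n.factorial_ne_zero
  have h4d : (4 : ℂ) ^ d ≠ 0 := pow_ne_zero _ (by norm_num)
  set c : ℂ := (-1) ^ j * (Real.pi : ℂ) * (j.factorial : ℂ) * ((d - j).factorial : ℂ) /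
      (4 ^ d * (d.factorial : ℂ)) with hc
  have hterm : ∀ k ∈ Finset.range (d + 1),
      ((-1 : ℂ) ^ (j + k) * ε ^ j *
        (if j ≤ 2 * k then ((d.choose (2 * k - j) : ℂ)) else 0)) *
        Complex.betaIntegral ((k : ℂ) + 1 / 2) ((d : ℂ) - (k : ℂ) + 1 / 2)
      = ε ^ j * (c * ((-1 : ℂ) ^ k * ((2 * k).choose j : ℂ) *
          ((2 * (d - k)).choose (d - j) : ℂ) * (d.choose k : ℂ))) := by
    intro k hk
    rw [Finset.mem_range] at hk
    have hkd : k ≤ d := by omega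
    rw [beta_val d k hkd]
    have e1 := cplx_id d j k hj hkd
    rw [hc]
    simp only [div_mul_eq_mul_div, mul_div_assoc']
    rw [div_eq_div_iff
      (mul_ne_zero (mul_ne_zero (mul_ne_zero h4d (ne k)) (ne (d - k))) (ne d))
      (mul_ne_zero h4d (ne d))]
    linear_combination ((-1 : ℂ) ^ (j + k) * ε ^ j * (Real.pi : ℂ) * 4 ^ d *
      (d.factorial : ℂ)) * e1
  rw [Finset.sum_congr rfl hterm, ← Finset.mul_sum, ← Finset.mul_sum]
  have hkey : ∑ k ∈ Finset.range (d + 1),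
      ((-1 : ℂ) ^ k * ((2 * k).choose j : ℂ) * ((2 * (d - k)).choose (d - j) : ℂ) *
        (d.choose k : ℂ))
      = (-1 : ℂ) ^ j * 2 ^ d * (d.choose j : ℂ) := by
    have := congrArg ((↑) : ℤ → ℂ) (key_id d j hj)
    push_cast at this
    rw [← this]
    exact Finset.sum_congr rfl fun k _ => by ring
  rw [hkey, hc]
  have hsq : ((-1 : ℂ)) ^ j * (-1) ^ j = 1 := by
    rw [← pow_add, show j + j = 2 * j by ring, pow_mul]
    norm_num
  have hfac : ((d.choose j : ℂ)) * (j.factorial : ℂ) * ((d - j).factorial : ℂ)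
      = (d.factorial : ℂ) := by
    exact_mod_cast congrArg ((↑) : ℕ → ℂ) (Nat.choose_mul_factorial_mul_factorial hj)
  have h4eq : (4 : ℂ) ^ d = 2 ^ d * 2 ^ d := by
    rw [← mul_pow]; norm_num
  have h2dne : ((2 : ℂ) ^ d) ≠ 0 := pow_ne_zero _ (by norm_num)
  have hR : ε ^ j * (2 : ℂ) ^ (-(d : ℤ)) * (Real.pi : ℂ)
      = (ε ^ j * (Real.pi : ℂ)) / 2 ^ d := by
    rw [zpow_neg, zpow_natCast]
    ring
  rw [hR]
  simp only [div_mul_eq_mul_div, mul_div_assoc']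
  rw [div_eq_div_iff (mul_ne_zero h4d (ne d)) h2dne]
  linear_combination (ε ^ j * (-1 : ℂ) ^ j * (-1 : ℂ) ^ j * (Real.pi : ℂ) * 2 ^ d * 2 ^ d) * hfac +
    (ε ^ j * (Real.pi : ℂ) * (d.factorial : ℂ) * 2 ^ d * 2 ^ d * (d.choose j : ℂ) * 0 +
      ε ^ j * (Real.pi : ℂ) * (d.factorial : ℂ) * 2 ^ d * 2 ^ d) * hsq -
    (ε ^ j * (Real.pi : ℂ) * (d.factorial : ℂ)) * h4eq
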